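/- arXiv:2202.08980 — 2 statements merged into one kernel-verified Lean document; each statement's English description precedes it below -/
import Mathlib

section
/- Assume 0 < q ≤ 1, α > 0, q + 1 < p ≤ 2, with the additional hypothesis a ≥ q(1−q) in case p = 2. Then the objective values satisfy the integral estimate ∫_{t₀}^{∞} t^{q} (g(x(t)) − g*) dt < +∞. -/
open Filter Topology Set MeasureTheory

lemma grad_convex_ineq {H : Type*} [NormedAddCommGroup H] [InnerProductSpace ℝ H] [CompleteSpace H]
    (g : H → ℝ) (g' : H → H) (hconv : ConvexOn ℝ Set.univ g)
    (hgrad : ∀ y : H, HasGradientAt g (g' y) y) (u v : H) :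
    g u + inner ℝ (g' u) (v - u) ≤ g v := by
  rcases eq_or_ne v u with rfl | hne
  · simp
  · have hline : HasDerivAt (fun s : ℝ => u + s • (v - u)) (v - u) 0 := by
      simpa using ((hasDerivAt_id (0:ℝ)).smul_const (v - u)).const_add u
    have hcomp : HasDerivAt (fun s : ℝ => g (u + s • (v - u)))
        (inner ℝ (g' u) (v - u) : ℝ) 0 := by
      have hg : HasFDerivAt g ((InnerProductSpace.toDual ℝ H) (g' u)) (u + (0:ℝ) • (v - u)) := by
        simpa using (hgrad u).hasFDerivAt
      have := hg.comp_hasDerivAt 0 hline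
      simp only [InnerProductSpace.toDual_apply_apply] at this; exact this
    have hconv' : ConvexOn ℝ Set.univ (fun s : ℝ => g (u + s • (v - u))) := by
      have := hconv.comp_affineMap (AffineMap.lineMap u v)
      refine (this.subset (subset_univ _) convex_univ).congr ?_
      intro s _
      simp [AffineMap.lineMap_apply, add_comm]
    have hs := hconv'.le_slope_of_hasDerivAt (mem_univ (0:ℝ)) (mem_univ (1:ℝ))
        one_pos hcomp
    rw [slope_def_field] at hs
    simp at hs
    linarith

set_option maxHeartbeats 2000000 in
theorem stmt6
    {H : Type*} [NormedAddCommGroup H] [InnerProductSpace ℝ H] [CompleteSpace H]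
    (g : H → ℝ) (g' : H → H)
    (hg_convex : ConvexOn ℝ Set.univ g)
    (hg_grad : ∀ y : H, HasGradientAt g (g' y) y)
    (hg_lip : ∀ s : Set H, Bornology.IsBounded s → ∃ K : NNReal, LipschitzOnWith K g' s)
    (t₀ α q a p : ℝ) (ht₀ : 0 < t₀) (hα : 0 < α) (hq0 : 0 < q) (ha0 : 0 < a) (hp0 : 0 < p)
    (x x' x'' : ℝ → H)
    (hx : ∀ t ≥ t₀, HasDerivAt x (x' t) t)
    (hx' : ∀ t ≥ t₀, HasDerivAt x' (x'' t) t)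
    (hx''c : ContinuousOn x'' (Set.Ici t₀))
    (hODE : ∀ t ≥ t₀, x'' t + (α / t ^ q) • x' t + g' (x t) + (a / t ^ p) • x t = 0)
    (xstar : H) (hxstar : ∀ y : H, g xstar ≤ g y)
    (hq1 : q ≤ 1) (hqp : q + 1 < p) (hp2 : p ≤ 2) (hpa : p = 2 → a ≥ q * (1 - q)) :
    MeasureTheory.IntegrableOn (fun t => t ^ q * (g (x t) - g xstar)) (Set.Ici t₀) := by
  have hq1' : q < 1 := by linarith
  set lam : ℝ := α / 2 with hlamdef
  have hlam0 : 0 < lam := by positivity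
  set φ : ℝ → ℝ := fun t => g (x t) - g xstar with hφdef
  have hφ0 : ∀ t, 0 ≤ φ t := fun t => sub_nonneg.2 (hxstar (x t))
  set d : ℝ → H := fun t => x t - xstar with hddef
  set v : ℝ → H := fun t => lam • d t + t ^ q • x' t with hvdef
  set μf : ℝ → ℝ := fun t => lam * (α - lam) - lam * q * t ^ (q - 1) with hμdef
  set E : ℝ → ℝ := fun t => t ^ (2*q) * φ t + a / 2 * t ^ (2*q - p) * ‖x t‖ ^ 2
      + 1 / 2 * ‖v t‖ ^ 2 + μf t / 2 * ‖d t‖ ^ 2 with hEdef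
  set Ed : ℝ → ℝ := fun t =>
      (2*q) * t ^ (2*q-1) * φ t + t ^ (2*q) * (inner ℝ (g' (x t)) (x' t) : ℝ)
    + a / 2 * ((2*q-p) * t ^ (2*q-p-1)) * ‖x t‖ ^ 2
    + a / 2 * t ^ (2*q-p) * (2 * (inner ℝ (x t) (x' t) : ℝ))
    + (inner ℝ (v t) (lam • x' t + ((q * t ^ (q-1)) • x' t + t ^ q • x'' t)) : ℝ)
    + lam * q * (1-q) * t ^ (q-2) / 2 * ‖d t‖ ^ 2 + μf t * (inner ℝ (d t) (x' t) : ℝ)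
    with hEddef
  -- positivity of points
  have hpos : ∀ t : ℝ, t₀ ≤ t → 0 < t := fun t ht => lt_of_lt_of_le ht₀ ht
  -- derivative of E
  have hE : ∀ t, t₀ ≤ t → HasDerivAt E (Ed t) t := by
    intro t ht
    have ht0 : 0 < t := hpos t ht
    have hxt := hx t ht
    have hx't := hx' t ht
    have hrpow : ∀ r : ℝ, HasDerivAt (fun s : ℝ => s ^ r) (r * t ^ (r-1)) t :=
      fun r => Real.hasDerivAt_rpow_const (Or.inl ht0.ne')
    have hgx : HasDerivAt (fun s => g (x s)) ((inner ℝ (g' (x t)) (x' t) : ℝ)) t := by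
      have hg : HasFDerivAt g ((InnerProductSpace.toDual ℝ H) (g' (x t))) (x t) :=
        (hg_grad (x t)).hasFDerivAt
      have := hg.comp_hasDerivAt t hxt
      simp only [InnerProductSpace.toDual_apply_apply] at this; exact this
    have hφ' : HasDerivAt φ ((inner ℝ (g' (x t)) (x' t) : ℝ)) t := hgx.sub_const _
    have hN : HasDerivAt (fun s => ‖x s‖ ^ 2) (2 * (inner ℝ (x t) (x' t) : ℝ)) t := by
      have h1 : HasDerivAt (fun s => (inner ℝ (x s) (x s) : ℝ))
          ((inner ℝ (x t) (x' t) : ℝ) + (inner ℝ (x' t) (x t) : ℝ)) t := hxt.inner ℝ hxt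
      have h2 : (fun s => (inner ℝ (x s) (x s) : ℝ)) = fun s => ‖x s‖ ^ 2 := by
        funext s; exact real_inner_self_eq_norm_sq (x s)
      rw [h2] at h1
      convert h1 using 1
      rw [real_inner_comm (x' t) (x t)]; ring
    have hdd : HasDerivAt d (x' t) t := hxt.sub_const _
    have hM : HasDerivAt (fun s => ‖d s‖ ^ 2) (2 * (inner ℝ (d t) (x' t) : ℝ)) t := by
      have h1 : HasDerivAt (fun s => (inner ℝ (d s) (d s) : ℝ))
          ((inner ℝ (d t) (x' t) : ℝ) + (inner ℝ (x' t) (d t) : ℝ)) t := hdd.inner ℝ hdd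
      have h2 : (fun s => (inner ℝ (d s) (d s) : ℝ)) = fun s => ‖d s‖ ^ 2 := by
        funext s; exact real_inner_self_eq_norm_sq (d s)
      rw [h2] at h1
      convert h1 using 1
      rw [real_inner_comm (x' t) (d t)]; ring
    have hv' : HasDerivAt v (lam • x' t + ((q * t ^ (q-1)) • x' t + t ^ q • x'' t)) t := by
      have h1 : HasDerivAt (fun s => lam • d s) (lam • x' t) t := hdd.const_smul lam
      have h2 : HasDerivAt (fun s : ℝ => s ^ q • x' s)
          (t ^ q • x'' t + (q * t ^ (q-1)) • x' t) t := (hrpow q).smul hx't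
      have := h1.add h2
      convert this using 1
      · rfl
      abel
    have hVn : HasDerivAt (fun s => ‖v s‖ ^ 2)
        (2 * (inner ℝ (v t) (lam • x' t + ((q * t ^ (q-1)) • x' t + t ^ q • x'' t)) : ℝ)) t := by
      have h1 := hv'.inner ℝ hv'
      have h2 : (fun s => (inner ℝ (v s) (v s) : ℝ)) = fun s => ‖v s‖ ^ 2 := by
        funext s; exact real_inner_self_eq_norm_sq (v s)
      rw [h2] at h1
      convert h1 using 1
      · rfl
      · rfl
      rw [real_inner_comm]; ring
    have hμ' : HasDerivAt μf (lam * q * (1-q) * t ^ (q-2)) t := by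
      have h1 : HasDerivAt (fun s : ℝ => lam * (α - lam) - lam * q * s ^ (q-1))
          (-(lam * q * ((q-1) * t ^ (q-1-1)))) t :=
        ((hrpow (q-1)).const_mul (lam * q)).const_sub (lam * (α - lam))
      rw [hμdef]
      convert h1 using 1
      rw [show q - 1 - 1 = q - 2 by ring]; ring
    have hEE := ((((hrpow (2*q)).mul hφ').add
        (((hrpow (2*q-p)).const_mul (a/2)).mul hN)).add
        (hVn.const_mul (1/2))).add ((hμ'.div_const 2).mul hM)
    rw [hEdef, hEddef]
    convert hEE using 1
    · rfl
    · rfl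
    · rfl
    ring
  -- continuity facts
  have hxc : ContinuousOn x (Ici t₀) := fun t ht => (hx t ht).continuousAt.continuousWithinAt
  have hx'c : ContinuousOn x' (Ici t₀) := fun t ht => (hx' t ht).continuousAt.continuousWithinAt
  have hP : ∀ r : ℝ, ContinuousOn (fun t : ℝ => t ^ r) (Ici t₀) := by
    intro r t ht
    exact (Real.continuousAt_rpow_const t r (Or.inl (hpos t ht).ne')).continuousWithinAt
  have hPne : ∀ r : ℝ, ∀ t ∈ Ici t₀, (t:ℝ) ^ r ≠ 0 := by
    intro r t ht
    exact (Real.rpow_pos_of_pos (hpos t ht) r).ne'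
  have hgxc : ContinuousOn (fun t => g' (x t)) (Ici t₀) := by
    have heq : ∀ t ∈ Ici t₀, g' (x t)
        = -x'' t - (α / t ^ q) • x' t - (a / t ^ p) • x t := by
      intro t ht
      have h := hODE t ht
      have h2 := congrArg (fun z => z - x'' t - (α / t ^ q) • x' t - (a / t ^ p) • x t) h
      rw [show (0:H) - x'' t - (α / t ^ q) • x' t - (a / t ^ p) • x t
        = -x'' t - (α / t ^ q) • x' t - (a / t ^ p) • x t by abel] at h2
      rw [← h2]
      abel
    refine ContinuousOn.congr ?_ heq
    refine (hx''c.neg.sub (ContinuousOn.smul ?_ hx'c)).sub (ContinuousOn.smul ?_ hxc)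
    · exact continuousOn_const.div (hP q) (hPne q)
    · exact continuousOn_const.div (hP p) (hPne p)
  have hφc : ContinuousOn φ (Ici t₀) := by
    have : ContinuousOn (fun t => g (x t)) (Ici t₀) := by
      intro t ht
      exact (((hg_grad (x t)).hasFDerivAt.comp_hasDerivAt t (hx t ht)).continuousAt).continuousWithinAt
    exact this.sub continuousOn_const
  have hdc : ContinuousOn d (Ici t₀) := hxc.sub continuousOn_const
  have hvc : ContinuousOn v (Ici t₀) :=
    (continuousOn_const.smul hdc).add ((hP q).smul hx'c)
  have hμfc : ContinuousOn μf (Ici t₀) :=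
    continuousOn_const.sub (continuousOn_const.mul (hP (q-1)))
  have hEdc : ContinuousOn Ed (Ici t₀) := by
    rw [hEddef]
    refine ContinuousOn.add (ContinuousOn.add (ContinuousOn.add (ContinuousOn.add
      (ContinuousOn.add (ContinuousOn.add ?_ ?_) ?_) ?_) ?_) ?_) ?_
    · exact (continuousOn_const.mul (hP (2*q-1))).mul hφc
    · exact (hP (2*q)).mul (ContinuousOn.inner hgxc hx'c)
    · exact (continuousOn_const.mul (continuousOn_const.mul (hP (2*q-p-1)))).mul
        ((hxc.norm).pow 2)
    · exact (continuousOn_const.mul (hP (2*q-p))).mul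
        (continuousOn_const.mul (ContinuousOn.inner hxc hx'c))
    · refine ContinuousOn.inner hvc ?_
      exact (continuousOn_const.smul hx'c).add
        (((continuousOn_const.mul (hP (q-1))).smul hx'c).add ((hP q).smul hx''c))
    · exact ((continuousOn_const.mul (hP (q-2))).div_const 2).mul ((hdc.norm).pow 2)
    · exact hμfc.mul (ContinuousOn.inner hdc hx'c)
  have hfc : ContinuousOn (fun t => t ^ q * φ t) (Ici t₀) := (hP q).mul hφc
  -- threshold T
  set T₂ : ℝ := (8*q/α) ^ (1/(1-q)) with hT₂def
  set T₃ : ℝ := if p = 2 then (1:ℝ) else (q*(1-q)/a) ^ (1/(2-p)) with hT₃def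
  set T : ℝ := max (max (max t₀ 1) T₂) T₃ with hTdef
  have hTt₀ : t₀ ≤ T := le_max_of_le_left (le_max_of_le_left (le_max_left _ _))
  have hT1 : (1:ℝ) ≤ T := le_max_of_le_left (le_max_of_le_left (le_max_right _ _))
  have hT0 : 0 < T := lt_of_lt_of_le one_pos hT1
  have hqP2 : ∀ t, T ≤ t → q * t ^ (q-1) ≤ α/8 := by
    intro t ht
    have ht0 : (0:ℝ) < t := lt_of_lt_of_le hT0 ht
    have hT₂t : T₂ ≤ t := le_trans (le_max_of_le_left (le_max_right _ _)) ht
    have hbase : (0:ℝ) ≤ 8*q/α := by positivity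
    have hpow : (8*q/α) ≤ t ^ (1-q) := by
      calc (8*q/α) = ((8*q/α) ^ (1/(1-q))) ^ (1-q) := by
            rw [← Real.rpow_mul hbase, one_div,
              inv_mul_cancel₀ (by linarith : (1:ℝ)-q ≠ 0), Real.rpow_one]
        _ ≤ t ^ (1-q) := by
            apply Real.rpow_le_rpow (Real.rpow_nonneg hbase _) hT₂t (by linarith)
    have hrw : t ^ (q-1) = (t ^ (1-q))⁻¹ := by
      rw [show q-1 = -(1-q) by ring, Real.rpow_neg ht0.le]
    rw [hrw]
    have hpos1 : (0:ℝ) < t ^ (1-q) := Real.rpow_pos_of_pos ht0 _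
    rw [mul_inv_le_iff₀ hpos1]
    have h8 : (0:ℝ) ≤ α/8 := by positivity
    have hmm := mul_le_mul_of_nonneg_left hpow h8
    have heq : α/8 * (8*q/α) = q := by field_simp
    linarith
  have hva : ∀ t, T ≤ t → q*(1-q) * t ^ (q-2) ≤ a * t ^ (q-p) := by
    intro t ht
    have ht0 : (0:ℝ) < t := lt_of_lt_of_le hT0 ht
    have hkey2 : q*(1-q) ≤ a * t ^ (2-p) := by
      rcases eq_or_lt_of_le hp2 with hp2' | hp2'
      · rw [hp2']
        simp only [sub_self, Real.rpow_zero, mul_one]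
        exact hpa hp2'
      · have hT₃t : T₃ ≤ t := le_trans (le_max_right _ _) ht
        rw [hT₃def, if_neg (by linarith : p ≠ 2)] at hT₃t
        have hbase : (0:ℝ) ≤ q*(1-q)/a := by
          apply div_nonneg _ ha0.le
          nlinarith
        have hpow : q*(1-q)/a ≤ t ^ (2-p) := by
          calc q*(1-q)/a = ((q*(1-q)/a) ^ (1/(2-p))) ^ (2-p) := by
                rw [← Real.rpow_mul hbase, one_div,
                  inv_mul_cancel₀ (by linarith : (2:ℝ)-p ≠ 0), Real.rpow_one]
            _ ≤ t ^ (2-p) := by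
                apply Real.rpow_le_rpow (Real.rpow_nonneg hbase _) hT₃t (by linarith)
        calc q*(1-q) = a * (q*(1-q)/a) := by field_simp
          _ ≤ a * t ^ (2-p) := by
              exact mul_le_mul_of_nonneg_left hpow ha0.le
    have hsplit : t ^ (q-p) = t ^ (2-p) * t ^ (q-2) := by
      rw [← Real.rpow_add ht0]; ring_nf
    rw [hsplit, ← mul_assoc]
    exact mul_le_mul_of_nonneg_right hkey2 (Real.rpow_pos_of_pos ht0 _).le
  -- key pointwise inequality
  set C : ℝ := a * lam / 2 * ‖xstar‖ ^ 2 with hCdef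
  have hC0 : 0 ≤ C := by positivity
  clear_value lam φ d v μf E Ed T₂ T₃ T C
  have hkey : ∀ t, T ≤ t → Ed t ≤ -(lam/2) * (t ^ q * φ t) + C * t ^ (q-p) := by
    intro t ht
    have ht0 : (0:ℝ) < t := lt_of_lt_of_le hT0 ht
    have htt₀ : t₀ ≤ t := le_trans hTt₀ ht
    have hP1 : (0:ℝ) < t ^ q := Real.rpow_pos_of_pos ht0 q
    have hP2 : (0:ℝ) < t ^ (q-1) := Real.rpow_pos_of_pos ht0 _
    have hP3 : (0:ℝ) < t ^ (q-p) := Real.rpow_pos_of_pos ht0 _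
    have hr1 : t ^ (2*q) = t ^ q * t ^ q := by
      rw [← Real.rpow_add ht0]; ring_nf
    have hr2 : t ^ (2*q-1) = t ^ q * t ^ (q-1) := by
      rw [← Real.rpow_add ht0]; ring_nf
    have hr3 : t ^ (2*q-p) = t ^ q * t ^ (q-p) := by
      rw [← Real.rpow_add ht0]; ring_nf
    have hr4 : t ^ (2*q-p-1) = t ^ (q-1) * t ^ (q-p) := by
      rw [← Real.rpow_add ht0]; ring_nf
    have h := hODE t htt₀
    have h2 : x'' t = -((α / t ^ q) • x' t + (g' (x t) + (a / t ^ p) • x t)) := by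
      rw [eq_neg_iff_add_eq_zero, ← h]; abel
    have hxsub : t ^ q • x'' t
        = -(α • x' t) - t ^ q • g' (x t) - (a * t ^ (q-p)) • x t := by
      rw [h2, smul_neg, smul_add, smul_add, smul_smul, smul_smul]
      have e1 : t ^ q * (α / t ^ q) = α := by
        field_simp
      have e2 : t ^ q * (a / t ^ p) = a * t ^ (q-p) := by
        rw [Real.rpow_sub ht0]; field_simp
      rw [e1, e2]
      abel
    have hgrad4 : φ t ≤ (inner ℝ (g' (x t)) (d t) : ℝ) := by
      have hgi := grad_convex_ineq g g' hg_convex hg_grad (x t) xstar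
      have h5 : (inner ℝ (g' (x t)) (xstar - x t) : ℝ) = -(inner ℝ (g' (x t)) (d t) : ℝ) := by
        simp only [hddef]
        rw [show xstar - x t = -(x t - xstar) by abel, inner_neg_right]
      rw [h5] at hgi
      simp only [hφdef]
      linarith
    have hA6 : (inner ℝ (d t) (x t) : ℝ) = (‖x t‖^2 + ‖d t‖^2 - ‖xstar‖^2)/2 := by
      have hnorm : ‖d t‖^2 = ‖x t‖^2 - 2 * (inner ℝ (x t) xstar : ℝ) + ‖xstar‖^2 := by
        simp only [hddef]
        exact norm_sub_sq_real (x t) xstar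
      have h6 : (inner ℝ (d t) (x t) : ℝ) = ‖x t‖^2 - (inner ℝ (x t) xstar : ℝ) := by
        simp only [hddef]
        rw [inner_sub_left, real_inner_self_eq_norm_sq, real_inner_comm xstar (x t)]
      rw [h6]
      linarith
    have hinner : (inner ℝ (v t) (lam • x' t + ((q * t ^ (q-1)) • x' t + t ^ q • x'' t)) : ℝ)
        = lam*(lam + q*t^(q-1) - α) * (inner ℝ (d t) (x' t) : ℝ)
        + t^q*(lam + q*t^(q-1) - α) * (inner ℝ (x' t) (x' t) : ℝ)
        - lam*t^q * (inner ℝ (d t) (g' (x t)) : ℝ)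
        - (t^q*t^q) * (inner ℝ (x' t) (g' (x t)) : ℝ)
        - a*lam*t^(q-p) * (inner ℝ (d t) (x t) : ℝ)
        - (a*t^(q-p)*t^q) * (inner ℝ (x' t) (x t) : ℝ) := by
      rw [hxsub]
      simp only [hvdef, inner_add_left, inner_add_right, inner_sub_right, inner_neg_right,
        real_inner_smul_left, real_inner_smul_right]
      ring
    have hEdt : Ed t = 2*q*t^(q-1) * (t^q * φ t)
        + (a/2*(2*q-p)) * (t^(q-1)*t^(q-p)*‖x t‖^2)
        + (lam + q*t^(q-1) - α) * (t^q * (inner ℝ (x' t) (x' t) : ℝ))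
        - lam*t^q * (inner ℝ (g' (x t)) (d t) : ℝ)
        - a*lam/2*t^(q-p) * ‖x t‖^2 - a*lam/2*t^(q-p) * ‖d t‖^2
        + a*lam/2*t^(q-p) * ‖xstar‖^2
        + lam*q*(1-q)*t^(q-2)/2 * ‖d t‖^2 := by
      simp only [hEddef]
      rw [hinner, real_inner_comm (x' t) (g' (x t)), real_inner_comm (x' t) (x t),
        real_inner_comm (d t) (g' (x t)), hA6, hr1, hr2, hr3, hr4]
      simp only [hμdef]
      ring
    have hq8 := hqP2 t ht
    have hb1 : 2*q*t^(q-1) * (t^q * φ t) ≤ lam/2 * (t^q * φ t) := by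
      apply mul_le_mul_of_nonneg_right _ (mul_nonneg hP1.le (hφ0 t))
      rw [hlamdef]; linarith
    have hb2 : (a/2*(2*q-p)) * (t^(q-1)*t^(q-p)*‖x t‖^2) ≤ 0 := by
      apply mul_nonpos_of_nonpos_of_nonneg
      · nlinarith
      · positivity
    have hb3 : (lam + q*t^(q-1) - α) * (t^q * (inner ℝ (x' t) (x' t) : ℝ)) ≤ 0 := by
      apply mul_nonpos_of_nonpos_of_nonneg
      · rw [hlamdef]; linarith
      · exact mul_nonneg hP1.le real_inner_self_nonneg
    have hb4 : -(lam*t^q * (inner ℝ (g' (x t)) (d t) : ℝ)) ≤ -(lam*t^q * φ t) := by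
      apply neg_le_neg
      exact mul_le_mul_of_nonneg_left hgrad4 (by positivity)
    have hb5 : lam*q*(1-q)*t^(q-2)/2 * ‖d t‖^2 ≤ a*lam/2*t^(q-p) * ‖d t‖^2 := by
      apply mul_le_mul_of_nonneg_right _ (sq_nonneg _)
      have := mul_le_mul_of_nonneg_left (hva t ht) (le_of_lt (half_pos hlam0))
      nlinarith
    have hb6 : (0:ℝ) ≤ a*lam/2*t^(q-p) * ‖x t‖^2 := by positivity
    rw [hEdt, hCdef]
    have hS : a*lam/2*t^(q-p) * ‖xstar‖^2 = a * lam / 2 * ‖xstar‖ ^ 2 * t ^ (q-p) := by ring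
    linarith [hb1, hb2, hb3, hb4, hb5, hb6, hS.le, hS.ge]
  -- nonnegativity of E beyond T
  have hE0 : ∀ t, T ≤ t → 0 ≤ E t := by
    intro t ht
    have ht0 : (0:ℝ) < t := lt_of_lt_of_le hT0 ht
    have hμf0 : 0 ≤ μf t := by
      simp only [hμdef]
      have hq8 := hqP2 t ht
      have hP2 : (0:ℝ) < t ^ (q-1) := Real.rpow_pos_of_pos ht0 _
      rw [hlamdef]
      nlinarith
    simp only [hEdef]
    have h1 : (0:ℝ) ≤ t ^ (2*q) * φ t :=
      mul_nonneg (Real.rpow_pos_of_pos ht0 _).le (hφ0 t)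
    have h2 : (0:ℝ) ≤ a / 2 * t ^ (2*q-p) * ‖x t‖^2 := by positivity
    have h3 : (0:ℝ) ≤ 1/2 * ‖v t‖^2 := by positivity
    have h4 : (0:ℝ) ≤ μf t / 2 * ‖d t‖^2 :=
      mul_nonneg (by linarith) (sq_nonneg _)
    linarith
  -- integral of the rpow tail
  set K : ℝ := T ^ (q-p+1) / (p-q-1) with hKdef
  have hK0 : 0 ≤ K := by
    apply div_nonneg (Real.rpow_pos_of_pos hT0 _).le
    linarith
  have hIqp : ∀ s, T ≤ s → (∫ u in T..s, u ^ (q-p)) ≤ K := by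
    intro s hs
    have hs0 : (0:ℝ) < s := lt_of_lt_of_le hT0 hs
    have h0T : (0:ℝ) ∉ Set.uIcc T s := by
      rw [Set.uIcc_of_le hs]
      intro h0
      exact absurd h0.1 (not_le.2 hT0)
    have hne : q - p ≠ -1 := by intro h0; linarith
    rw [integral_rpow (Or.inr ⟨hne, h0T⟩)]
    have hse : (0:ℝ) < s ^ (q-p+1) := Real.rpow_pos_of_pos hs0 _
    have hTe : (0:ℝ) < T ^ (q-p+1) := Real.rpow_pos_of_pos hT0 _
    have hd : (0:ℝ) < p - q - 1 := by linarith
    have key : (s ^ (q-p+1) - T ^ (q-p+1))/(q-p+1)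
        = (T ^ (q-p+1) - s ^ (q-p+1))/(p-q-1) := by
      rw [show p - q - 1 = -(q-p+1) by ring, div_neg, ← neg_div, neg_sub]
    rw [key, hKdef]
    exact (div_le_div_iff_of_pos_right hd).mpr (by linarith)
  have hsub : ∀ s, T ≤ s → Icc T s ⊆ Ici t₀ := fun s hs u hu => le_trans hTt₀ hu.1
  set B : ℝ := 2*(E T + C*K)/lam with hBdef
  have hB : ∀ s, T ≤ s → (∫ u in T..s, ‖u ^ q * φ u‖) ≤ B := by
    intro s hs
    have i1 : IntervalIntegrable (fun u => u ^ q * φ u) volume T s := by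
      apply ContinuousOn.intervalIntegrable
      rw [Set.uIcc_of_le hs]; exact hfc.mono (hsub s hs)
    have i2 : IntervalIntegrable Ed volume T s := by
      apply ContinuousOn.intervalIntegrable
      rw [Set.uIcc_of_le hs]; exact hEdc.mono (hsub s hs)
    have i3 : IntervalIntegrable (fun u : ℝ => u ^ (q-p)) volume T s := by
      apply ContinuousOn.intervalIntegrable
      rw [Set.uIcc_of_le hs]
      intro u hu
      exact (Real.continuousAt_rpow_const u _
        (Or.inl (lt_of_lt_of_le hT0 hu.1).ne')).continuousWithinAt
    have hFTC : ∫ u in T..s, Ed u = E s - E T := by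
      apply intervalIntegral.integral_eq_sub_of_hasDerivAt _ i2
      intro u hu
      rw [Set.uIcc_of_le hs] at hu
      exact hE u (le_trans hTt₀ hu.1)
    have hmono : (∫ u in T..s, (lam/2) * (u ^ q * φ u))
        ≤ ∫ u in T..s, (C * u ^ (q-p) - Ed u) := by
      apply intervalIntegral.integral_mono_on hs (i1.const_mul _) ((i3.const_mul _).sub i2)
      intro u hu
      have := hkey u hu.1
      linarith
    rw [intervalIntegral.integral_const_mul] at hmono
    have hsplit : (∫ u in T..s, (C * u ^ (q-p) - Ed u))
        = C * (∫ u in T..s, u ^ (q-p)) - (E s - E T) := by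
      rw [intervalIntegral.integral_sub (i3.const_mul _) i2, hFTC,
        intervalIntegral.integral_const_mul]
    rw [hsplit] at hmono
    have hEs := hE0 s hs
    have hIq := hIqp s hs
    have hle : (lam/2) * (∫ u in T..s, u ^ q * φ u) ≤ E T + C * K := by
      nlinarith [mul_le_mul_of_nonneg_left hIq hC0]
    have hnn : (∫ u in T..s, ‖u ^ q * φ u‖) = ∫ u in T..s, u ^ q * φ u := by
      apply intervalIntegral.integral_congr
      intro u hu
      rw [Set.uIcc_of_le hs] at hu
      exact Real.norm_of_nonneg
        (mul_nonneg (Real.rpow_pos_of_pos (lt_of_lt_of_le hT0 hu.1) q).le (hφ0 u))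
    rw [hnn, hBdef, le_div_iff₀ hlam0]
    linarith
  have hIoi : IntegrableOn (fun u => u ^ q * φ u) (Ioi T) := by
    refine MeasureTheory.integrableOn_Ioi_of_intervalIntegral_norm_bounded
      B T (fun s : ℝ => ?_) (tendsto_id : Tendsto (id : ℝ → ℝ) atTop atTop) ?_
    · show IntegrableOn _ (Ioc T s) _
      rcases le_or_gt s T with hsT | hsT
      · rw [Set.Ioc_eq_empty (not_lt.2 hsT)]
        exact integrableOn_empty
      · exact (ContinuousOn.integrableOn_Icc (hfc.mono (hsub s hsT.le))).mono_set
          Set.Ioc_subset_Icc_self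
    · filter_upwards [eventually_ge_atTop T] with s hs
      exact hB s hs
  have hIcc : IntegrableOn (fun u => u ^ q * φ u) (Icc t₀ T) :=
    ContinuousOn.integrableOn_Icc (hfc.mono (fun u hu => hu.1))
  have hfinal : IntegrableOn (fun u => u ^ q * φ u) (Ici t₀) := by
    apply (hIcc.union hIoi).mono_set
    intro u hu
    rcases le_or_gt u T with h | h
    · exact Or.inl ⟨hu, h⟩
    · exact Or.inr h
  have heq : (fun t => t ^ q * (g (x t) - g xstar)) = (fun u => u ^ q * φ u) := by
    funext u
    rw [hφdef]
  rw [heq]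
  exact hfinal
end

section
/- Assume 0 < q < 1, α > 0 and (3q+1)/2 ≤ p ≤ (4q+2)/3 (note (4q+2)/3 < q+1). Then g(x(t)) − g* = O(1/t^{p}) as t → ∞. -/
open Filter Topology Set MeasureTheory
open scoped RealInnerProductSpace
set_option maxRecDepth 4000
set_option maxHeartbeats 2000000

open Filter Topology Set
open scoped RealInnerProductSpace
set_option maxRecDepth 4000
set_option maxHeartbeats 2000000

private lemma hasDerivAt_rpow_const' {t : ℝ} (ht : 0 < t) (r : ℝ) :
    HasDerivAt (fun s : ℝ => s ^ r) (r * t ^ r / t) t := by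
  have h := Real.hasDerivAt_rpow_const (x := t) (p := r) (Or.inl ht.ne')
  convert h using 1
  rw [Real.rpow_sub ht, Real.rpow_one]
  ring

private lemma grad_ineq {H : Type*} [NormedAddCommGroup H] [InnerProductSpace ℝ H] [CompleteSpace H]
    {g : H → ℝ} {v y : H} (hg : ConvexOn ℝ Set.univ g) (hv : HasGradientAt g v y) (z : H) :
    g y + ⟪v, z - y⟫ ≤ g z := by
  have hline : ∀ s : ℝ, HasDerivAt (fun s : ℝ => y + s • (z - y)) (z - y) s := by
    intro s
    simpa using ((hasDerivAt_id s).smul_const (z - y)).const_add y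
  have h0 : (fun s : ℝ => y + s • (z - y)) 0 = y := by simp
  have hφ : HasDerivAt (fun s : ℝ => g (y + s • (z - y))) ⟪v, z - y⟫ 0 := by
    have hF : HasFDerivAt g (InnerProductSpace.toDual ℝ H v) ((fun s : ℝ => y + s • (z - y)) 0) := by
      rw [h0]; exact hv.hasFDerivAt
    have h := hF.comp_hasDerivAt 0 (hline 0)
    simp only [InnerProductSpace.toDual_apply_apply] at h
    exact h
  have hslope : Tendsto (slope (fun s : ℝ => g (y + s • (z - y))) 0) (𝓝[>] (0:ℝ))
      (𝓝 ⟪v, z - y⟫) := by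
    have := hasDerivAt_iff_tendsto_slope.mp hφ
    exact this.mono_left (nhdsWithin_mono _ (fun s hs => ne_of_gt hs))
  have key : ∀ᶠ s in 𝓝[>] (0:ℝ), slope (fun s : ℝ => g (y + s • (z - y))) 0 s ≤ g z - g y := by
    filter_upwards [Ioo_mem_nhdsGT_of_mem (Set.left_mem_Ico.mpr zero_lt_one)] with s hs
    have hs0 : 0 < s := hs.1
    have hs1 : s < 1 := hs.2
    have hc := hg.2 (Set.mem_univ y) (Set.mem_univ z) (by linarith : (0:ℝ) ≤ 1 - s)
      hs0.le (by ring)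
    have hpt : (1 - s) • y + s • z = y + s • (z - y) := by module
    rw [hpt] at hc
    rw [slope_def_field]
    have : (g (y + s • (z - y)) - g y) / s ≤ g z - g y := by
      rw [div_le_iff₀ hs0]
      simp only [smul_eq_mul] at hc
      nlinarith [hc]
    simpa [div_eq_iff hs0.ne', sub_zero] using this
  have := le_of_tendsto hslope key
  linarith
set_option maxHeartbeats 2000000

private lemma le_of_sq_le_sq' {s B : ℝ} (h : s ^ 2 ≤ B ^ 2) (hB : 0 ≤ B) : s ≤ B := by
  nlinarith [h, hB]

private lemma core_ineq (p q a α t P R1 R2 L F D n2u n2v n2x n2s iux' : ℝ)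
    (hp0 : 0 < p) (hpq : q < p) (ht : 0 < t) (hP : 0 < P)
    (hR1 : 0 < R1) (hR2 : 0 < R2) (hL : 0 < L)
    (hR2P : R2 * t ^ 2 = P)
    (ha : 0 < a) (hα : 0 < α)
    (hF : 0 ≤ F) (hFD : F ≤ D) (hu : 0 ≤ n2u) (hv : 0 ≤ n2v) (hx : 0 ≤ n2x) (hs : 0 ≤ n2s)
    (hCS : iux' * iux' ≤ n2u * n2v)
    (h2 : 2 * p + 3 ≤ α * L)
    (h1 : (p+1)*α*(p-q)/2 * R1 + (|p-1| * (p+1)^2 + (p+1)*(p+2) * |p-1| / 2) * R2 ≤ (p+1)*a/2) :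
    (p+1)*P*F - (p+1)*P*D
      + ((p-1)/2) * R2 * ((p+1)^2*n2u + 2*(p+1)*t*iux' + t^2*n2v)
      + (p+2 - α*L) * P * n2v
      + ((p+1)*α*(p-q)/2 * R1 - (p+1)*(p+2)*(p-1)/2 * R2) * n2u
      - ((p+1)*a/2) * (n2x + n2u - n2s) + (a/2) * (n2x - n2s)
    ≤ p*a/2 * n2s := by
  set b := |p - 1| with hbdef
  have hb0 : 0 ≤ b := abs_nonneg _
  have hb1 : p - 1 ≤ b := le_abs_self _
  have hb2 : -(p - 1) ≤ b := neg_le_abs _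
  have hbp : b ≤ p + 1 := abs_le.mpr ⟨by linarith, by linarith⟩
  have hB0 : 0 ≤ (p+1)^2*n2u + t^2*n2v := by positivity
  have hs2 : (2*(p+1)*t*iux')^2 ≤ ((p+1)^2*n2u + t^2*n2v)^2 := by
    nlinarith [sq_nonneg ((p+1)^2*n2u - t^2*n2v),
      mul_nonneg (sq_nonneg ((p+1)*t)) (sub_nonneg.mpr hCS)]
  have hAM : 2*(p+1)*t*iux' ≤ (p+1)^2*n2u + t^2*n2v := le_of_sq_le_sq' hs2 hB0
  have hAM' : -(2*(p+1)*t*iux') ≤ (p+1)^2*n2u + t^2*n2v := by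
    refine le_of_sq_le_sq' ?_ hB0
    nlinarith [hs2]
  have hZ0 : 0 ≤ (p+1)^2*n2u + 2*(p+1)*t*iux' + t^2*n2v := by linarith
  have s1a : ((p-1)/2) * ((p+1)^2*n2u + 2*(p+1)*t*iux' + t^2*n2v)
      ≤ (b/2) * ((p+1)^2*n2u + 2*(p+1)*t*iux' + t^2*n2v) :=
    mul_le_mul_of_nonneg_right (by linarith) hZ0
  have s1b : (b/2) * ((p+1)^2*n2u + 2*(p+1)*t*iux' + t^2*n2v)
      ≤ b * ((p+1)^2*n2u + t^2*n2v) := by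
    have h := mul_le_mul_of_nonneg_left hAM (by positivity : (0:ℝ) ≤ b/2)
    linarith [h]
  have step1 := s1a.trans s1b
  have hT2 : ((p-1)/2) * R2 * ((p+1)^2*n2u + 2*(p+1)*t*iux' + t^2*n2v)
      ≤ b*(p+1)^2 * (R2*n2u) + b * (P*n2v) := by
    have h := mul_le_mul_of_nonneg_left step1 hR2.le
    rw [← hR2P]
    linarith [h]
  have hT1 : (p+1)*P*F - (p+1)*P*D ≤ 0 := by
    have h := mul_le_mul_of_nonneg_left hFD (mul_nonneg (by linarith : (0:ℝ) ≤ p+1) hP.le)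
    linarith [h]
  have hT3 : (p+2 - α*L) * P * n2v + b * (P*n2v) ≤ 0 := by
    have hf : p + 2 + b - α*L ≤ 0 := by linarith
    have h := mul_nonpos_of_nonpos_of_nonneg hf (mul_nonneg hP.le hv)
    linarith [h]
  have hT4 : ((p+1)*α*(p-q)/2 * R1 - (p+1)*(p+2)*(p-1)/2 * R2) * n2u
      + b*(p+1)^2 * (R2*n2u) - ((p+1)*a/2) * n2u ≤ 0 := by
    have hfac : (p+1)*α*(p-q)/2 * R1 - (p+1)*(p+2)*(p-1)/2 * R2 + b*(p+1)^2 * R2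
        - (p+1)*a/2 ≤ 0 := by
      have hmul : (-(p-1)) * ((p+1)*(p+2)/2 * R2) ≤ b * ((p+1)*(p+2)/2 * R2) :=
        mul_le_mul_of_nonneg_right hb2 (by positivity)
      linarith [h1, hmul]
    have h := mul_nonpos_of_nonpos_of_nonneg hfac hu
    linarith [h]
  have hx0 : 0 ≤ p * a / 2 * n2x := by positivity
  linarith [hT1, hT2, hT3, hT4, hx0]


private noncomputable def zf {H : Type*} [NormedAddCommGroup H] [InnerProductSpace ℝ H]
    (xstar : H) (p : ℝ) (x x' : ℝ → H) (s : ℝ) : H :=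
  (p+1) • (x s - xstar) + s • x' s

private noncomputable def xif (α p q : ℝ) (s : ℝ) : ℝ :=
  (p+1)*α*s^(p-q-1) - (p+1)*(p+2)*s^(p-2)

private noncomputable def Ef {H : Type*} [NormedAddCommGroup H] [InnerProductSpace ℝ H]
    (g : H → ℝ) (xstar : H) (a p q α : ℝ) (x x' : ℝ → H) (s : ℝ) : ℝ :=
  s^p * (g (x s) - g xstar) + a/2 * (⟪x s, x s⟫ - ⟪xstar, xstar⟫)
    + s^(p-2)/2 * ⟪zf xstar p x x' s, zf xstar p x x' s⟫
    + xif α p q s / 2 * ⟪x s - xstar, x s - xstar⟫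

theorem stmt14
    {H : Type*} [NormedAddCommGroup H] [InnerProductSpace ℝ H] [CompleteSpace H]
    (g : H → ℝ) (g' : H → H)
    (hg_convex : ConvexOn ℝ Set.univ g)
    (hg_grad : ∀ y : H, HasGradientAt g (g' y) y)
    (hg_lip : ∀ s : Set H, Bornology.IsBounded s → ∃ K : NNReal, LipschitzOnWith K g' s)
    (t₀ α q a p : ℝ) (ht₀ : 0 < t₀) (hα : 0 < α) (hq0 : 0 < q) (ha0 : 0 < a) (hp0 : 0 < p)
    (x x' x'' : ℝ → H)
    (hx : ∀ t ≥ t₀, HasDerivAt x (x' t) t)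
    (hx' : ∀ t ≥ t₀, HasDerivAt x' (x'' t) t)
    (hx''c : ContinuousOn x'' (Set.Ici t₀))
    (hODE : ∀ t ≥ t₀, x'' t + (α / t ^ q) • x' t + g' (x t) + (a / t ^ p) • x t = 0)
    (xstar : H) (hxstar : ∀ y : H, g xstar ≤ g y)
    (hq1 : q < 1) (hp1 : (3 * q + 1) / 2 ≤ p) (hp2 : p ≤ (4 * q + 2) / 3) :
    (∃ C > (0:ℝ), ∃ t₁ ≥ t₀, ∀ t ≥ t₁, |g (x t) - g xstar| ≤ C / t ^ (p)) := by
  have hpq1 : p < q + 1 := by nlinarith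
  have hqp : q < p := by nlinarith
  have hp2' : p < 2 := by linarith
  -- eventual smallness conditions
  have h2ev : ∀ᶠ t in atTop, 2*p+3 ≤ α * t^(1-q) :=
    (Tendsto.const_mul_atTop hα (tendsto_rpow_atTop (by linarith : (0:ℝ) < 1-q))).eventually_ge_atTop (2*p+3)
  have h1ev : ∀ᶠ t in atTop,
      (p+1)*α*(p-q)/2 * t^(p-q-1) + (|p-1| * (p+1)^2 + (p+1)*(p+2) * |p-1| / 2) * t^(p-2)
        ≤ (p+1)*a/2 := by
    have l1 : Tendsto (fun t : ℝ => t^(p-q-1)) atTop (𝓝 0) := by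
      have h := tendsto_rpow_neg_atTop (by linarith : (0:ℝ) < q+1-p)
      simp only [show -(q+1-p) = p-q-1 from by ring] at h
      exact h
    have l2 : Tendsto (fun t : ℝ => t^(p-2)) atTop (𝓝 0) := by
      have h := tendsto_rpow_neg_atTop (by linarith : (0:ℝ) < 2-p)
      simp only [show -(2-p) = p-2 from by ring] at h
      exact h
    have l3 : Tendsto (fun t : ℝ =>
        (p+1)*α*(p-q)/2 * t^(p-q-1) + (|p-1| * (p+1)^2 + (p+1)*(p+2) * |p-1| / 2) * t^(p-2))
        atTop (𝓝 ((p+1)*α*(p-q)/2 * 0 + (|p-1| * (p+1)^2 + (p+1)*(p+2) * |p-1| / 2) * 0)) :=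
      (l1.const_mul _).add (l2.const_mul _)
    rw [mul_zero, mul_zero, add_zero] at l3
    exact l3.eventually_le_const (by positivity)
  obtain ⟨T, hT⟩ := eventually_atTop.mp (h2ev.and h1ev)
  obtain ⟨t₁, ht₁def⟩ : ∃ v : ℝ, v = max T t₀ := ⟨_, rfl⟩
  have ht₁t₀ : t₀ ≤ t₁ := ht₁def ▸ le_max_right _ _
  have ht₁0 : 0 < t₁ := lt_of_lt_of_le ht₀ ht₁t₀
  -- the key derivative bound
  have key : ∀ t, t₁ ≤ t → ∃ V, HasDerivAt (fun s => s * Ef g xstar a p q α x x' s) V t ∧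
      V ≤ p*a/2*⟪xstar, xstar⟫ := by
    intro t htt
    have ht0t : t₀ ≤ t := le_trans ht₁t₀ htt
    have htp : 0 < t := lt_of_lt_of_le ht₀ ht0t
    obtain ⟨hc2, hc1⟩ := hT t (le_trans (ht₁def ▸ le_max_left T t₀) htt)
    have hxt := hx t ht0t
    have hx't := hx' t ht0t
    have hgx : HasDerivAt (fun s => g (x s)) ⟪g' (x t), x' t⟫ t := by
      have hF : HasFDerivAt g (InnerProductSpace.toDual ℝ H (g' (x t))) (x t) :=
        (hg_grad (x t)).hasFDerivAt
      have h := hF.comp_hasDerivAt t hxt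
      simp only [InnerProductSpace.toDual_apply_apply] at h
      exact h
    have hZt : HasDerivAt (zf xstar p x x')
        ((p+1) • x' t + (t • x'' t + (1:ℝ) • x' t)) t :=
      ((hxt.sub_const xstar).const_smul (p+1)).add ((hasDerivAt_id t).smul hx't)
    have hut : HasDerivAt (fun s => x s - xstar) (x' t) t := hxt.sub_const xstar
    have hxit : HasDerivAt (xif α p q)
        ((p+1)*α*((p-q-1)*t^(p-q-1)/t) - (p+1)*(p+2)*((p-2)*t^(p-2)/t)) t :=
      ((hasDerivAt_rpow_const' htp (p-q-1)).const_mul ((p+1)*α)).sub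
        ((hasDerivAt_rpow_const' htp (p-2)).const_mul ((p+1)*(p+2)))
    have hE : HasDerivAt (Ef g xstar a p q α x x')
        ((p*t^p/t * (g (x t) - g xstar) + t^p * ⟪g' (x t), x' t⟫)
          + a/2 * (⟪x t, x' t⟫ + ⟪x' t, x t⟫)
          + (((p-2)*t^(p-2)/t)/2 * ⟪zf xstar p x x' t, zf xstar p x x' t⟫
             + t^(p-2)/2 * (⟪zf xstar p x x' t, (p+1) • x' t + (t • x'' t + (1:ℝ) • x' t)⟫
               + ⟪(p+1) • x' t + (t • x'' t + (1:ℝ) • x' t), zf xstar p x x' t⟫))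
          + (((p+1)*α*((p-q-1)*t^(p-q-1)/t) - (p+1)*(p+2)*((p-2)*t^(p-2)/t))/2
               * ⟪x t - xstar, x t - xstar⟫
             + xif α p q t / 2 * (⟪x t - xstar, x' t⟫ + ⟪x' t, x t - xstar⟫))) t := by
      exact (((((hasDerivAt_rpow_const' htp p).mul (hgx.sub_const (g xstar))).add
        (((hxt.inner ℝ hxt).sub_const ⟪xstar, xstar⟫).const_mul (a/2))).add
        (((hasDerivAt_rpow_const' htp (p-2)).div_const 2).mul (hZt.inner ℝ hZt))).add
        ((hxit.div_const 2).mul (hut.inner ℝ hut)))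
    have hGd : HasDerivAt (fun s => s * Ef g xstar a p q α x x' s)
        (1 * Ef g xstar a p q α x x' t + t * _) t := (hasDerivAt_id t).mul hE
    refine ⟨_, hGd, ?_⟩
    -- now prove the bound on the derivative value
    have hode := hODE t ht0t
    have hxpp : x'' t = -((α / t ^ q) • x' t) - g' (x t) - (a / t ^ p) • x t := by
      rw [add_assoc, add_assoc] at hode
      rw [eq_neg_of_add_eq_zero_left hode]
      abel
    -- power facts
    have hQ : (0:ℝ) < t^q := Real.rpow_pos_of_pos htp q
    have hP : (0:ℝ) < t^p := Real.rpow_pos_of_pos htp p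
    have hpw1 : t^(p-2) = t^p/t^2 := by
      rw [show p-2 = p-(2:ℕ) by norm_num, Real.rpow_sub htp, Real.rpow_natCast]
    have hpw2 : t^(p-q-1) = t^p/(t^q*t) := by
      rw [show p-q-1 = p-(q+1) by ring, Real.rpow_sub htp, Real.rpow_add htp, Real.rpow_one]
    have hpw3 : t^(1-q) = t/t^q := by
      rw [Real.rpow_sub htp, Real.rpow_one]
    -- convexity facts
    have hFnn : 0 ≤ g (x t) - g xstar := sub_nonneg.mpr (hxstar (x t))
    have hFD : g (x t) - g xstar ≤ ⟪g' (x t), x t⟫ - ⟪g' (x t), xstar⟫ := by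
      have h := grad_ineq hg_convex (hg_grad (x t)) xstar
      rw [inner_sub_right] at h
      linarith
    have hcomm1 : ⟪xstar, x t⟫ = ⟪x t, xstar⟫ := real_inner_comm _ _
    have hUU : 0 ≤ ⟪x t, x t⟫ - 2*⟪x t, xstar⟫ + ⟪xstar, xstar⟫ := by
      have h : (0:ℝ) ≤ ⟪x t - xstar, x t - xstar⟫ := real_inner_self_nonneg
      simp only [inner_sub_left, inner_sub_right] at h
      rw [hcomm1] at h
      linarith
    have hCS : (⟪x t, x' t⟫ - ⟪xstar, x' t⟫) * (⟪x t, x' t⟫ - ⟪xstar, x' t⟫)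
        ≤ (⟪x t, x t⟫ - 2*⟪x t, xstar⟫ + ⟪xstar, xstar⟫) * ⟪x' t, x' t⟫ := by
      have h := real_inner_mul_inner_self_le (x t - xstar) (x' t)
      simp only [inner_sub_left, inner_sub_right] at h
      rw [hcomm1] at h
      linarith
    have hcore := core_ineq p q a α t (t^p) (t^p/(t^q*t)) (t^p/t^2) (t/t^q)
      (g (x t) - g xstar) (⟪g' (x t), x t⟫ - ⟪g' (x t), xstar⟫)
      (⟪x t, x t⟫ - 2*⟪x t, xstar⟫ + ⟪xstar, xstar⟫) ⟪x' t, x' t⟫ ⟪x t, x t⟫ ⟪xstar, xstar⟫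
      (⟪x t, x' t⟫ - ⟪xstar, x' t⟫) hp0 hqp htp hP (by positivity) (by positivity) (by positivity)
      (by field_simp) ha0 hα hFnn hFD hUU real_inner_self_nonneg real_inner_self_nonneg
      real_inner_self_nonneg hCS (by rw [← hpw3]; exact hc2) (by rw [← hpw2, ← hpw1]; exact hc1)
    refine le_trans (le_of_eq ?_) hcore
    rw [hxpp]
    simp only [Ef, zf, xif]
    simp only [inner_add_left, inner_add_right, inner_sub_left, inner_sub_right,
      inner_neg_left, inner_neg_right, real_inner_smul_left, real_inner_smul_right, one_smul]
    rw [real_inner_comm (x t) (x' t), real_inner_comm (x t) xstar,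
      real_inner_comm (g' (x t)) (x t), real_inner_comm (g' (x t)) xstar,
      real_inner_comm (g' (x t)) (x' t), real_inner_comm xstar (x' t),
      hpw1, hpw2]
    field_simp
    ring
  -- Gronwall / monotonicity argument
  obtain ⟨C₁, hC₁def⟩ : ∃ v : ℝ, v = p*a/2*⟪xstar, xstar⟫ := ⟨_, rfl⟩
  rw [← hC₁def] at key
  have hC₁ : 0 ≤ C₁ := hC₁def ▸ mul_nonneg (by positivity) real_inner_self_nonneg
  have hmono : MonotoneOn (fun s => C₁ * s - s * Ef g xstar a p q α x x' s) (Ici t₁) := by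
    apply monotoneOn_of_deriv_nonneg (convex_Ici t₁)
    · intro s hs
      obtain ⟨V, hV, -⟩ := key s hs
      exact (((hasDerivAt_id s).const_mul C₁).sub hV).continuousAt.continuousWithinAt
    · intro s hs
      rw [interior_Ici] at hs
      obtain ⟨V, hV, -⟩ := key s (le_of_lt hs)
      exact (((hasDerivAt_id s).const_mul C₁).sub hV).differentiableAt.differentiableWithinAt
    · intro s hs
      rw [interior_Ici] at hs
      obtain ⟨V, hV, hVle⟩ := key s (le_of_lt hs)
      have hd : HasDerivAt (fun s => C₁ * s - s * Ef g xstar a p q α x x' s) (C₁ * 1 - V) s :=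
        ((hasDerivAt_id s).const_mul C₁).sub hV
      rw [hd.deriv]
      linarith
  obtain ⟨M, hMdef⟩ : ∃ v : ℝ, v = |t₁ * Ef g xstar a p q α x x' t₁| / t₁ + C₁ := ⟨_, rfl⟩
  have hM0 : 0 ≤ M := hMdef ▸ add_nonneg (div_nonneg (abs_nonneg _) ht₁0.le) hC₁
  have hSS : (0:ℝ) ≤ ⟪xstar, xstar⟫ := real_inner_self_nonneg
  have haSS : (0:ℝ) ≤ a/2*⟪xstar, xstar⟫ := mul_nonneg (by positivity) hSS
  refine ⟨M + a/2*⟪xstar, xstar⟫ + 1, by linarith, t₁, ht₁t₀, fun t htt => ?_⟩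
  have htp : 0 < t := lt_of_lt_of_le ht₁0 htt
  have ht0t : t₀ ≤ t := le_trans ht₁t₀ htt
  have hP : (0:ℝ) < t^p := Real.rpow_pos_of_pos htp p
  -- E t is bounded by M
  have hEt : Ef g xstar a p q α x x' t ≤ M := by
    have hmon := hmono self_mem_Ici (mem_Ici.mpr htt) htt
    simp only at hmon
    have habs : |t₁ * Ef g xstar a p q α x x' t₁| ≥ t₁ * Ef g xstar a p q α x x' t₁ :=
      le_abs_self _
    have hc₁t : C₁ * t₁ ≥ 0 := mul_nonneg hC₁ ht₁0.le
    have hGt : t * Ef g xstar a p q α x x' t ≤ |t₁ * Ef g xstar a p q α x x' t₁| + C₁ * t := by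
      linarith
    have e1 : Ef g xstar a p q α x x' t ≤ (|t₁ * Ef g xstar a p q α x x' t₁| + C₁ * t)/t :=
      (le_div_iff₀ htp).mpr (by linarith [hGt])
    have e2 : (|t₁ * Ef g xstar a p q α x x' t₁| + C₁ * t)/t
        = |t₁ * Ef g xstar a p q α x x' t₁|/t + C₁ := by
      field_simp
    have e3 : |t₁ * Ef g xstar a p q α x x' t₁|/t ≤ |t₁ * Ef g xstar a p q α x x' t₁|/t₁ := by
      gcongr
    rw [e2] at e1
    rw [hMdef]
    linarith
  -- lower bound for E
  have hEl : t^p * (g (x t) - g xstar) - a/2*⟪xstar, xstar⟫ ≤ Ef g xstar a p q α x x' t := by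
    obtain ⟨hc2, -⟩ := hT t (le_trans (ht₁def ▸ le_max_left T t₀) htt)
    have h1 : (0:ℝ) ≤ ⟪x t, x t⟫ := real_inner_self_nonneg
    have h2 : (0:ℝ) ≤ t^(p-2)/2 * ⟪zf xstar p x x' t, zf xstar p x x' t⟫ :=
      mul_nonneg (by positivity) real_inner_self_nonneg
    have h4 : (0:ℝ) ≤ ⟪x t - xstar, x t - xstar⟫ := real_inner_self_nonneg
    have h3 : 0 ≤ xif α p q t := by
      have hsplit : t^(p-q-1) = t^(p-2)*t^(1-q) := by
        rw [← Real.rpow_add htp]; ring_nf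
      have hA : (0:ℝ) < t^(p-2) := Real.rpow_pos_of_pos htp _
      have hB : (0:ℝ) ≤ α*t^(1-q) - (p+2) := by linarith
      simp only [xif, hsplit]
      nlinarith [mul_nonneg hA.le hB]
    simp only [Ef]
    nlinarith [mul_nonneg h3 h4, mul_nonneg ha0.le h1]
  -- conclude
  have hgoal : g (x t) - g xstar ≤ (M + a/2*⟪xstar, xstar⟫)/t^p := by
    have hc : t^p * (g (x t) - g xstar) ≤ M + a/2*⟪xstar, xstar⟫ := by linarith
    rw [le_div_iff₀ hP, mul_comm]
    exact hc
  rw [abs_of_nonneg (sub_nonneg.mpr (hxstar (x t)))]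
  have hmono2 : (M + a/2*⟪xstar, xstar⟫)/t^p ≤ (M + a/2*⟪xstar, xstar⟫ + 1)/t^p := by
    rw [div_le_div_iff₀ hP hP]
    nlinarith [hP.le]
  linarith
end
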